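/- Let λ, μ be real numbers with λ ≥ 1 and λ + μ > 1/2. Then for every z in the open unit disc 𝕌, the derivative of the second normalized Wright function satisfies |𝕎'_{λ,μ}(z)| ≤ (2(λ+μ)+1)/(2(λ+μ)−1), where 𝕎'_{λ,μ}(z) = 1 + ∑_{m=1}^∞ (Γ(λ+μ)(m+1)/((m+1)! Γ(λm+λ+μ))) z^m. -/

import Mathlib

lemma gamma_mono {x y : ℝ} (hx : 2 ≤ x) (hxy : x ≤ y) :
    Real.Gamma x ≤ Real.Gamma y :=
  Real.Gamma_strictMonoOn_Ici.monotoneOn hx (le_trans hx hxy) hxy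

lemma gamma_three : Real.Gamma 3 = 2 := by
  rw [(by norm_num : (3:ℝ) = 2 + 1), Real.Gamma_add_one (by norm_num), Real.Gamma_two]; norm_num

lemma gamma_le_one {x : ℝ} (h1 : 1 ≤ x) (h2 : x ≤ 2) : Real.Gamma x ≤ 1 := by
  have := Real.convexOn_Gamma.2 (Set.mem_Ioi.mpr (by norm_num : (0:ℝ) < 1))
      (Set.mem_Ioi.mpr (by norm_num : (0:ℝ) < 2))
      (by linarith : (0:ℝ) ≤ 2 - x) (by linarith : (0:ℝ) ≤ x - 1) (by ring)
  simp only [smul_eq_mul, Real.Gamma_one, Real.Gamma_two] at this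
  have hx : (2 - x) * 1 + (x - 1) * 2 = x := by ring
  rw [hx] at this
  linarith

lemma gamma_ge_sub_one {x : ℝ} (h1 : 1 ≤ x) (h2 : x ≤ 2) : x - 1 ≤ Real.Gamma x := by
  rcases eq_or_lt_of_le h2 with h | h
  · rw [h, Real.Gamma_two]; norm_num
  · have h3x : (0:ℝ) < 3 - x := by linarith
    have := Real.convexOn_Gamma.2 (Set.mem_Ioi.mpr (by linarith : (0:ℝ) < x))
        (Set.mem_Ioi.mpr (by norm_num : (0:ℝ) < 3))
        (by positivity : (0:ℝ) ≤ 1 / (3 - x))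
        (div_nonneg (by linarith) (by linarith) : (0:ℝ) ≤ (2 - x) / (3 - x))
        (by field_simp; ring)
    simp only [smul_eq_mul, gamma_three] at this
    have hx : 1 / (3 - x) * x + (2 - x) / (3 - x) * 3 = 2 := by field_simp; ring
    rw [hx, Real.Gamma_two] at this
    have hΓ : 0 < Real.Gamma x := Real.Gamma_pos_of_pos (by linarith)
    have h2' : (1 / (3 - x)) * Real.Gamma x + ((2 - x) / (3 - x)) * 2
        = (Real.Gamma x + 2 * (2 - x)) / (3 - x) := by field_simp
    rw [h2', le_div_iff₀ h3x] at this
    nlinarith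

lemma fact_gamma_lower {a : ℝ} (ha : 0 < a) :
    ∀ k : ℕ, a * (2 * a + 1) ^ k * Real.Gamma a
      ≤ (Nat.factorial (k + 1)) * Real.Gamma ((k + 1 : ℕ) + a) := by
  intro k
  induction k with
  | zero =>
      simp only [Nat.factorial, Nat.cast_one, pow_zero]
      rw [add_comm (((0:ℕ)+1:ℕ):ℝ) a]
      push_cast
      rw [Real.Gamma_add_one ha.ne']
      ring_nf
      exact le_rfl
  | succ k ih =>
      have hΓpos : 0 < Real.Gamma ((k + 1 : ℕ) + a) :=
        Real.Gamma_pos_of_pos (by positivity)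
      have hrec : Real.Gamma ((k + 2 : ℕ) + a) = ((k + 1 : ℕ) + a) * Real.Gamma ((k + 1 : ℕ) + a) := by
        have : ((k + 2 : ℕ) + a : ℝ) = ((k + 1 : ℕ) + a) + 1 := by push_cast; ring
        rw [this, Real.Gamma_add_one (by positivity)]
      have hfact : (Nat.factorial (k + 2) : ℝ) = (k + 2) * Nat.factorial (k + 1) := by
        rw [Nat.factorial_succ]; push_cast; ring
      have key : (2 * a + 1) ≤ ((k:ℝ) + 2) * ((k + 1 : ℕ) + a) := by
        push_cast
        nlinarith [Nat.cast_nonneg (α := ℝ) k]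
      calc a * (2 * a + 1) ^ (k + 1) * Real.Gamma a
          = (2 * a + 1) * (a * (2 * a + 1) ^ k * Real.Gamma a) := by ring
        _ ≤ (((k:ℝ) + 2) * ((k + 1 : ℕ) + a)) * (a * (2 * a + 1) ^ k * Real.Gamma a) := by
            apply mul_le_mul_of_nonneg_right key
            have := Real.Gamma_pos_of_pos ha
            positivity
        _ ≤ (((k:ℝ) + 2) * ((k + 1 : ℕ) + a)) * ((Nat.factorial (k + 1)) * Real.Gamma ((k + 1 : ℕ) + a)) := by
            apply mul_le_mul_of_nonneg_left ih
            have : (0:ℝ) < (k + 1 : ℕ) + a := by positivity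
            nlinarith [Nat.cast_nonneg (α := ℝ) k]
        _ = (Nat.factorial (k + 2)) * Real.Gamma ((k + 2 : ℕ) + a) := by
            rw [hrec, hfact]; push_cast; ring

/-- The derivative of the second normalized Wright function:
`𝕎'_{λ,μ}(z) = 1 + ∑_{m=1}^∞ (Γ(λ+μ)(m+1)/((m+1)! Γ(λm+λ+μ))) z^m`
(the `m = 0` term is `1`). -/
noncomputable def normWright2Deriv (lam mu : ℝ) (z : ℂ) : ℂ :=
  ∑' m : ℕ,
    ((Real.Gamma (lam + mu) * (m + 1) /
        (Nat.factorial (m + 1) * Real.Gamma (lam * m + lam + mu)) : ℝ) : ℂ) * z ^ m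

/-- If `λ ≥ 1` and `λ + μ > 1/2`, then `|𝕎'_{λ,μ}(z)| ≤ (2(λ+μ)+1)/(2(λ+μ)-1)` on the
open unit disc. -/
theorem abs_normWright2Deriv_le (lam mu : ℝ) (hlam : 1 ≤ lam) (hmu : 1 / 2 < lam + mu) :
    ∀ z : ℂ, ‖z‖ < 1 →
      ‖normWright2Deriv lam mu z‖ ≤ (2 * (lam + mu) + 1) / (2 * (lam + mu) - 1) := by
  intro z hz
  have ha : (0:ℝ) < lam + mu := by linarith
  have hΓa : 0 < Real.Gamma (lam + mu) := Real.Gamma_pos_of_pos ha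
  have h2a1 : (0:ℝ) < 2 * (lam + mu) + 1 := by linarith
  have h2am1 : (0:ℝ) < 2 * (lam + mu) - 1 := by linarith
  set a := lam + mu with ha_def
  -- the coefficients
  set c : ℕ → ℝ := fun m =>
    Real.Gamma (lam + mu) * (m + 1) /
      (Nat.factorial (m + 1) * Real.Gamma (lam * m + lam + mu)) with hc_def
  set F : ℕ → ℂ := fun m => ((c m : ℝ) : ℂ) * z ^ m with hF_def
  have hW : normWright2Deriv lam mu z = ∑' m, F m := rfl
  have hargpos : ∀ m : ℕ, 0 < lam * m + lam + mu := by
    intro m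
    have : (0:ℝ) ≤ lam * m := by positivity
    linarith
  have hc_nonneg : ∀ m, 0 ≤ c m := by
    intro m
    apply div_nonneg
    · positivity
    · exact mul_nonneg (Nat.cast_nonneg _) (Real.Gamma_pos_of_pos (hargpos m)).le
  have hFnorm : ∀ m, ‖F m‖ ≤ c m := by
    intro m
    rw [hF_def]
    simp only [norm_mul, Complex.norm_real, Real.norm_eq_abs, norm_pow,
      abs_of_nonneg (hc_nonneg m)]
    calc c m * ‖z‖ ^ m ≤ c m * 1 := by
          apply mul_le_mul_of_nonneg_left _ (hc_nonneg m)
          exact pow_le_one₀ (norm_nonneg z) hz.le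
      _ = c m := mul_one _
  -- B₁ bound for the m = 1 coefficient
  set B : ℝ := 1 / a + 1 / (2 * a ^ 2 * (2 * a - 1)) with hB_def
  have hBden : (0:ℝ) < 2 * a ^ 2 * (2 * a - 1) := by positivity
  have h1aB : 1 / a ≤ B := by
    rw [hB_def]
    have : (0:ℝ) ≤ 1 / (2 * a ^ 2 * (2 * a - 1)) := by positivity
    linarith
  have hc1 : c 1 ≤ B := by
    have hx1 : lam * (1:ℕ) + lam + mu = lam + a := by push_cast; ring
    have hΓx : 0 < Real.Gamma (lam + a) := Real.Gamma_pos_of_pos (by linarith)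
    have hc1eq : c 1 = Real.Gamma a / Real.Gamma (lam + a) := by
      rw [hc_def]
      simp only [hx1]
      norm_num [Nat.factorial]
      ring
    rw [hc1eq]
    by_cases hA : 1 ≤ a
    · -- Γ(λ+a) ≥ Γ(1+a) = a Γ(a)
      have h1 : Real.Gamma (a + 1) ≤ Real.Gamma (lam + a) := by
        apply gamma_mono (by linarith)
        linarith
      rw [Real.Gamma_add_one ha.ne'] at h1
      have : Real.Gamma a / Real.Gamma (lam + a) ≤ 1 / a := by
        rw [div_le_div_iff₀ hΓx ha]
        nlinarith
      linarith
    · push_neg at hA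
      have hΓ1a : Real.Gamma (a + 1) ≤ 1 := gamma_le_one (by linarith) (by linarith)
      have hΓa_le : Real.Gamma a ≤ 1 / a := by
        rw [Real.Gamma_add_one ha.ne'] at hΓ1a
        rw [le_div_iff₀ ha]
        linarith [mul_comm a (Real.Gamma a)]
      by_cases hx2 : 2 ≤ lam + a
      · have hΓx1 : (1:ℝ) ≤ Real.Gamma (lam + a) := by
          have := gamma_mono (le_refl 2) hx2
          rwa [Real.Gamma_two] at this
        have : Real.Gamma a / Real.Gamma (lam + a) ≤ Real.Gamma a :=
          div_le_self hΓa.le hΓx1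
        calc Real.Gamma a / Real.Gamma (lam + a) ≤ Real.Gamma a := this
          _ ≤ 1 / a := hΓa_le
          _ ≤ B := h1aB
      · push_neg at hx2
        have hΓx_ge : a ≤ Real.Gamma (lam + a) := by
          have := gamma_ge_sub_one (x := lam + a) (by linarith) hx2.le
          linarith
        have step : Real.Gamma a / Real.Gamma (lam + a) ≤ (1 / a) / a :=
          div_le_div₀ (by positivity) hΓa_le ha hΓx_ge
        have hB2 : (1 / a) / a ≤ B := by
          rw [div_div, hB_def]
          rw [div_add_div _ _ (by positivity : a ≠ 0) hBden.ne', div_le_div_iff₀ (by positivity) (by positivity)]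
          nlinarith
        linarith
  -- bound on coefficients for m ≥ 2
  have hc2 : ∀ k : ℕ, c (k + 2) ≤ 1 / a * (1 / (2 * a + 1)) ^ (k + 1) := by
    intro k
    have hypos : (0:ℝ) < lam * ((k + 2 : ℕ) : ℝ) + lam + mu := hargpos (k + 2)
    have hΓy : 0 < Real.Gamma (lam * ((k + 2 : ℕ) : ℝ) + lam + mu) :=
      Real.Gamma_pos_of_pos hypos
    have hceq : c (k + 2) = Real.Gamma a /
        ((Nat.factorial (k + 2)) * Real.Gamma (lam * ((k + 2 : ℕ) : ℝ) + lam + mu)) := by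
      rw [hc_def]
      have hfact : (Nat.factorial (k + 3) : ℝ) = (k + 3) * Nat.factorial (k + 2) := by
        rw [Nat.factorial_succ]; push_cast; ring
      have hfne : (Nat.factorial (k + 2) : ℝ) ≠ 0 := by positivity
      show Real.Gamma (lam + mu) * (((k + 2 : ℕ) : ℝ) + 1) /
          ((Nat.factorial (k + 2 + 1) : ℝ) * Real.Gamma (lam * ((k + 2 : ℕ) : ℝ) + lam + mu)) = _
      rw [show k + 2 + 1 = k + 3 from rfl, hfact]
      rw [div_eq_div_iff (by positivity) (by positivity)]
      push_cast
      ring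
    have hmono : Real.Gamma (((k + 2 : ℕ) : ℝ) + a) ≤
        Real.Gamma (lam * ((k + 2 : ℕ) : ℝ) + lam + mu) := by
      apply gamma_mono
      · push_cast; linarith [Nat.cast_nonneg (α := ℝ) k]
      · push_cast
        nlinarith [Nat.cast_nonneg (α := ℝ) k]
    have hlow := fact_gamma_lower ha (k + 1)
    have hlow' : a * (2 * a + 1) ^ (k + 1) * Real.Gamma a
        ≤ (Nat.factorial (k + 2)) * Real.Gamma (lam * ((k + 2 : ℕ) : ℝ) + lam + mu) := by
      calc a * (2 * a + 1) ^ (k + 1) * Real.Gamma a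
          ≤ (Nat.factorial (k + 2)) * Real.Gamma (((k + 2 : ℕ) : ℝ) + a) := by
            convert hlow using 3 <;> norm_num
        _ ≤ _ := by
            apply mul_le_mul_of_nonneg_left hmono (by positivity)
    have hden_pos : (0:ℝ) < a * (2 * a + 1) ^ (k + 1) * Real.Gamma a := by positivity
    rw [hceq]
    calc Real.Gamma a / ((Nat.factorial (k + 2)) * Real.Gamma (lam * ((k + 2 : ℕ) : ℝ) + lam + mu))
        ≤ Real.Gamma a / (a * (2 * a + 1) ^ (k + 1) * Real.Gamma a) := by
          apply div_le_div_of_nonneg_left hΓa.le hden_pos hlow'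
      _ = 1 / a * (1 / (2 * a + 1)) ^ (k + 1) := by
          rw [div_pow, one_pow]
          field_simp
  -- geometric comparison series
  have hr0 : (0:ℝ) ≤ 1 / (2 * a + 1) := by positivity
  have hr1 : 1 / (2 * a + 1) < 1 := by
    rw [div_lt_one h2a1]; linarith
  have hgeo : HasSum (fun k : ℕ => 1 / a * (1 / (2 * a + 1)) ^ (k + 1))
      (1 / a * (1 / (2 * a + 1)) * (1 - 1 / (2 * a + 1))⁻¹) := by
    have h := (hasSum_geometric_of_lt_one hr0 hr1).mul_left (1 / a * (1 / (2 * a + 1)))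
    have he : (fun k : ℕ => 1 / a * (1 / (2 * a + 1)) ^ (k + 1))
        = fun k : ℕ => (1 / a * (1 / (2 * a + 1))) * (1 / (2 * a + 1)) ^ k := by
      funext k; ring
    rw [he]
    exact h
  -- summability of the full series
  have hS2 : Summable (fun k : ℕ => F (k + 2)) :=
    Summable.of_norm_bounded hgeo.summable
      (fun k => (hFnorm (k + 2)).trans (hc2 k))
  have hS : Summable F := (summable_nat_add_iff 2).mp hS2
  have hS1 : Summable (fun n : ℕ => F (n + 1)) := (summable_nat_add_iff 1).mpr hS
  -- split the sum
  have hsplit : ∑' m, F m = F 0 + (F 1 + ∑' k, F (k + 2)) := by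
    rw [Summable.tsum_eq_zero_add hS, Summable.tsum_eq_zero_add hS1]
  -- norms of the first two terms
  have hF0 : F 0 = 1 := by
    rw [hF_def, hc_def]
    simp only [pow_zero, mul_one]
    norm_num [Nat.factorial]
    exact hΓa.ne'
  have hT : ‖∑' k, F (k + 2)‖ ≤ 1 / a * (1 / (2 * a + 1)) * (1 - 1 / (2 * a + 1))⁻¹ :=
    tsum_of_norm_bounded hgeo (fun k => (hFnorm (k + 2)).trans (hc2 k))
  -- final estimate
  rw [hW, hsplit]
  have hfinal : 1 + (B + 1 / a * (1 / (2 * a + 1)) * (1 - 1 / (2 * a + 1))⁻¹)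
      ≤ (2 * a + 1) / (2 * a - 1) := by
    have hsub : 1 - 1 / (2 * a + 1) = 2 * a / (2 * a + 1) := by
      field_simp
      ring
    rw [hsub, hB_def]
    rw [inv_div]
    have hne : 2 * a - 1 ≠ 0 := h2am1.ne'
    apply le_of_eq
    have t3 : 1 / a * (1 / (2 * a + 1)) * ((2 * a + 1) / (2 * a)) = 1 / (2 * a ^ 2) := by
      rw [div_mul_div_comm, div_mul_div_comm, div_eq_div_iff (by positivity) (by positivity)]
      ring
    have hD : (0:ℝ) < 2 * a ^ 2 * (2 * a - 1) := by positivity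
    rw [t3, div_add_div _ _ ha.ne' hD.ne', div_add_div _ _ (by positivity) (by positivity),
      one_add_div (by positivity), div_eq_div_iff (by positivity) hne]
    ring
  calc ‖F 0 + (F 1 + ∑' k, F (k + 2))‖
      ≤ ‖F 0‖ + (‖F 1‖ + ‖∑' k, F (k + 2)‖) :=
        (norm_add_le _ _).trans (by gcongr; exact norm_add_le _ _)
    _ ≤ 1 + (B + 1 / a * (1 / (2 * a + 1)) * (1 - 1 / (2 * a + 1))⁻¹) := by
        rw [hF0, norm_one]
        gcongr
        all_goals first
          | exact (hFnorm 1).trans hc1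
          | exact hT
    _ ≤ (2 * a + 1) / (2 * a - 1) := hfinal
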